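/- For any nonzero vectors x and y in a real normed linear space, ‖x+y‖ ≤ ‖x‖ + ‖y‖ − (2 − ‖x/‖x‖ + y/‖y‖‖)·min{‖x‖, ‖y‖}. -/

import Mathlib

lemma aux_14 {X : Type*} [NormedAddCommGroup X] [NormedSpace ℝ X]
    (x y : X) (hx : x ≠ 0) (hy : y ≠ 0) (h : ‖x‖ ≤ ‖y‖) :
    ‖x + y‖ ≤ ‖x‖ + ‖y‖ - (2 - ‖(1 / ‖x‖) • x + (1 / ‖y‖) • y‖) * min ‖x‖ ‖y‖ := by
  have ha : (0:ℝ) < ‖x‖ := norm_pos_iff.mpr hx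
  have hb : (0:ℝ) < ‖y‖ := norm_pos_iff.mpr hy
  have key : x + y = ‖x‖ • ((1 / ‖x‖) • x + (1 / ‖y‖) • y) + (1 - ‖x‖ / ‖y‖) • y := by
    match_scalars <;> field_simp <;> ring
  have hmin : min ‖x‖ ‖y‖ = ‖x‖ := min_eq_left h
  rw [hmin, key]
  calc ‖_ + _‖ ≤ ‖‖x‖ • ((1 / ‖x‖) • x + (1 / ‖y‖) • y)‖ + ‖(1 - ‖x‖ / ‖y‖) • y‖ :=
        norm_add_le _ _
    _ = ‖x‖ * ‖(1 / ‖x‖) • x + (1 / ‖y‖) • y‖ + (1 - ‖x‖ / ‖y‖) * ‖y‖ := by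
        rw [norm_smul, norm_smul, Real.norm_of_nonneg ha.le,
          Real.norm_of_nonneg (sub_nonneg.mpr ((div_le_one hb).mpr h))]
    _ ≤ _ := by
        have : (1 - ‖x‖ / ‖y‖) * ‖y‖ = ‖y‖ - ‖x‖ := by field_simp
        rw [this]; ring_nf; nlinarith

theorem stmt_14 {X : Type*} [NormedAddCommGroup X] [NormedSpace ℝ X]
    (x y : X) (hx : x ≠ 0) (hy : y ≠ 0) :
    ‖x + y‖ ≤ ‖x‖ + ‖y‖ - (2 - ‖(1 / ‖x‖) • x + (1 / ‖y‖) • y‖) * min ‖x‖ ‖y‖ := by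
  rcases le_total ‖x‖ ‖y‖ with h | h
  · exact aux_14 x y hx hy h
  · have := aux_14 y x hy hx h
    rw [add_comm y x, add_comm ((1 / ‖y‖) • y), min_comm] at this
    linarith
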